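/- arXiv:2308.16233 — 4 statements merged into one kernel-verified Lean document; each statement's English description precedes it below -/
import Mathlib

section
/- For any integer ℓ ≥ 0 and real x ≥ 0, the function F_ℓ(x) := x·g(ℓ,x) − ℓ·g(ℓ+1,x), where g(ℓ,x) is the regularized lower incomplete gamma function g(ℓ,x) = (1/(ℓ-1)!)∫₀ˣ t^{ℓ-1} e^{-t} dt (with g(0,x)=1), satisfies 0 ≤ F_ℓ(x) ≤ x. -/
open MeasureTheory Set intervalIntegral Real


/-- Regularized lower incomplete gamma function for natural `ℓ`:
`g ℓ x = (1/(ℓ-1)!) ∫₀ˣ t^(ℓ-1) e^{-t} dt` for `ℓ ≥ 1`, with `g 0 x = 1`. -/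
noncomputable def regIncGamma (ℓ : ℕ) (x : ℝ) : ℝ :=
  if ℓ = 0 then 1
  else (1 / (Nat.factorial (ℓ - 1) : ℝ)) * ∫ t in (0:ℝ)..x, t ^ (ℓ - 1) * Real.exp (-t)

/-- `F_ℓ(x) = x·g(ℓ,x) − ℓ·g(ℓ+1,x)`. -/
noncomputable def Fgam (ℓ : ℕ) (x : ℝ) : ℝ :=
  x * regIncGamma ℓ x - (ℓ : ℝ) * regIncGamma (ℓ + 1) x

lemma cont_aux (n : ℕ) : Continuous (fun t : ℝ => t ^ n * Real.exp (-t)) := by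
  continuity

lemma int_aux (n : ℕ) (a b : ℝ) :
    IntervalIntegrable (fun t : ℝ => t ^ n * Real.exp (-t)) volume a b :=
  (cont_aux n).intervalIntegrable a b

lemma integral_nonneg_aux (n : ℕ) (x : ℝ) (hx : 0 ≤ x) :
    0 ≤ ∫ t in (0:ℝ)..x, t ^ n * Real.exp (-t) := by
  apply intervalIntegral.integral_nonneg hx
  intro t ht
  exact mul_nonneg (pow_nonneg ht.1 n) (Real.exp_pos _).le

lemma integral_le_factorial (n : ℕ) (x : ℝ) (hx : 0 ≤ x) :
    ∫ t in (0:ℝ)..x, t ^ n * Real.exp (-t) ≤ (n.factorial : ℝ) := by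
  have hconv : IntegrableOn (fun t : ℝ => Real.exp (-t) * t ^ ((n : ℝ) + 1 - 1)) (Ioi 0) :=
    Real.GammaIntegral_convergent (by positivity)
  have heq : ∀ t : ℝ, 0 < t → t ^ n * Real.exp (-t) = Real.exp (-t) * t ^ ((n : ℝ) + 1 - 1) := by
    intro t ht
    rw [add_sub_cancel_right, Real.rpow_natCast, mul_comm]
  rw [intervalIntegral.integral_of_le hx]
  calc ∫ t in Ioc 0 x, t ^ n * Real.exp (-t)
      = ∫ t in Ioc 0 x, Real.exp (-t) * t ^ ((n : ℝ) + 1 - 1) := by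
        apply setIntegral_congr_fun measurableSet_Ioc
        intro t ht; exact heq t ht.1
    _ ≤ ∫ t in Ioi 0, Real.exp (-t) * t ^ ((n : ℝ) + 1 - 1) := by
        apply setIntegral_mono_set hconv
        · filter_upwards [self_mem_ae_restrict measurableSet_Ioi] with t ht
          exact mul_nonneg (Real.exp_pos _).le (Real.rpow_nonneg (le_of_lt ht) _)
        · exact HasSubset.Subset.eventuallyLE Ioc_subset_Ioi_self
    _ = Real.Gamma ((n : ℝ) + 1) := (Real.Gamma_eq_integral (by positivity)).symm
    _ = (n.factorial : ℝ) := Real.Gamma_nat_eq_factorial n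

lemma reg_nonneg (ℓ : ℕ) (x : ℝ) (hx : 0 ≤ x) : 0 ≤ regIncGamma ℓ x := by
  unfold regIncGamma
  split
  · norm_num
  · exact mul_nonneg (by positivity) (integral_nonneg_aux _ x hx)

lemma reg_le_one (ℓ : ℕ) (x : ℝ) (hx : 0 ≤ x) : regIncGamma ℓ x ≤ 1 := by
  unfold regIncGamma
  split
  · norm_num
  · rw [div_mul_eq_mul_div, one_mul, div_le_one (by positivity)]
    simpa using integral_le_factorial (ℓ - 1) x hx

lemma key_aux (n : ℕ) (x : ℝ) (hx : 0 ≤ x) :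
    ∫ t in (0:ℝ)..x, t ^ (n+1) * Real.exp (-t) ≤
      x * ∫ t in (0:ℝ)..x, t ^ n * Real.exp (-t) := by
  rw [← intervalIntegral.integral_const_mul]
  apply intervalIntegral.integral_mono_on hx (int_aux (n+1) 0 x)
    ((int_aux n 0 x).const_mul x)
  intro t ht
  have h1 : 0 ≤ t ^ n * Real.exp (-t) :=
    mul_nonneg (pow_nonneg ht.1 n) (Real.exp_pos _).le
  have : t ^ (n+1) * Real.exp (-t) = t * (t ^ n * Real.exp (-t)) := by ring
  rw [this]
  exact mul_le_mul_of_nonneg_right ht.2 h1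

/-- For `ℓ ≥ 0` and `x ≥ 0`, `0 ≤ F_ℓ(x) ≤ x`. -/
theorem Fgam_nonneg_le (ℓ : ℕ) (x : ℝ) (hx : 0 ≤ x) :
    0 ≤ Fgam ℓ x ∧ Fgam ℓ x ≤ x := by
  constructor
  · unfold Fgam
    rcases Nat.eq_zero_or_pos ℓ with h0 | hpos
    · subst h0; simp [regIncGamma, hx]
    · obtain ⟨n, rfl⟩ : ∃ n, ℓ = n + 1 := ⟨ℓ - 1, by omega⟩
      rw [regIncGamma, regIncGamma, if_neg (by omega), if_neg (by omega)]
      simp only [Nat.add_sub_cancel]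
      set I := ∫ t in (0:ℝ)..x, t ^ n * Real.exp (-t) with hI
      set J := ∫ t in (0:ℝ)..x, t ^ (n+1) * Real.exp (-t) with hJ
      have hrw : ((n+1 : ℕ) : ℝ) * (1 / ((n+1).factorial : ℝ)) = 1 / (n.factorial : ℝ) := by
        rw [Nat.factorial_succ]
        push_cast
        rw [mul_one_div]
        rw [div_mul_eq_div_div, div_self (by positivity)]
      have h2 : ((n+1 : ℕ) : ℝ) * (1 / ((n+1).factorial : ℝ) * J)
          = 1 / (n.factorial : ℝ) * J := by rw [← mul_assoc, hrw]
      rw [h2]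
      have h3 : x * (1 / (n.factorial : ℝ) * I) - 1 / (n.factorial : ℝ) * J
          = 1 / (n.factorial : ℝ) * (x * I - J) := by ring
      rw [h3]
      apply mul_nonneg (by positivity)
      linarith [key_aux n x hx]
  · unfold Fgam
    have h1 : x * regIncGamma ℓ x ≤ x :=
      (mul_le_of_le_one_right hx (reg_le_one ℓ x hx))
    have h2 : 0 ≤ (ℓ : ℝ) * regIncGamma (ℓ + 1) x :=
      mul_nonneg (Nat.cast_nonneg _) (reg_nonneg _ x hx)
    linarith
end

section
/- For any integer ℓ ≥ 0, F_ℓ(x) ~ x^{ℓ+1}/(ℓ+1)! as x → 0⁺; more precisely, the limit of F_ℓ(x)/x^{ℓ+1} as x → 0⁺ equals 1/(ℓ+1)!. -/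
open Filter intervalIntegral

lemma key_tendsto (k : ℕ) :
    Filter.Tendsto (fun x : ℝ => (∫ t in (0:ℝ)..x, t ^ k * Real.exp (-t)) / x ^ (k+1))
      (nhdsWithin 0 (Set.Ioi 0)) (nhds (1 / ((k:ℝ)+1))) := by
  have hcont : Continuous fun t : ℝ => t ^ k * Real.exp (-t) := by continuity
  have hk1 : (0:ℝ) < (k:ℝ) + 1 := by positivity
  apply tendsto_of_tendsto_of_tendsto_of_le_of_le'
    (g := fun x : ℝ => Real.exp (-x) / ((k:ℝ)+1))
    (h := fun _ : ℝ => 1 / ((k:ℝ)+1))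
  · have h : Filter.Tendsto (fun x : ℝ => Real.exp (-x) / ((k:ℝ)+1)) (nhds 0)
        (nhds (1/((k:ℝ)+1))) := by
      have := ((Real.continuous_exp.comp continuous_neg).div_const ((k:ℝ)+1)).tendsto 0
      simpa using this
    exact h.mono_left nhdsWithin_le_nhds
  · exact tendsto_const_nhds
  · filter_upwards [self_mem_nhdsWithin] with x hx
    have hx0 : (0:ℝ) < x := hx
    have hxpow : (0:ℝ) < x ^ (k+1) := pow_pos hx0 _
    have hle : Real.exp (-x) * (x^(k+1)/((k:ℝ)+1)) ≤ ∫ t in (0:ℝ)..x, t^k * Real.exp (-t) := by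
      have hmono : (∫ t in (0:ℝ)..x, t^k * Real.exp (-x)) ≤
          ∫ t in (0:ℝ)..x, t^k * Real.exp (-t) := by
        apply intervalIntegral.integral_mono_on hx0.le
        · exact (Continuous.intervalIntegrable (by continuity) _ _)
        · exact hcont.intervalIntegrable _ _
        · intro t ht
          exact mul_le_mul_of_nonneg_left (Real.exp_le_exp.2 (neg_le_neg ht.2))
            (pow_nonneg ht.1 k)
      calc Real.exp (-x) * (x^(k+1)/((k:ℝ)+1))
          = ∫ t in (0:ℝ)..x, t^k * Real.exp (-x) := by
            rw [intervalIntegral.integral_mul_const, integral_pow]; ring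
        _ ≤ _ := hmono
    calc Real.exp (-x) / ((k:ℝ)+1)
        = (Real.exp (-x) * (x^(k+1)/((k:ℝ)+1))) / x^(k+1) := by
          field_simp
      _ ≤ (∫ t in (0:ℝ)..x, t^k * Real.exp (-t)) / x^(k+1) := by gcongr
  · filter_upwards [self_mem_nhdsWithin] with x hx
    have hx0 : (0:ℝ) < x := hx
    have hxpow : (0:ℝ) < x ^ (k+1) := pow_pos hx0 _
    have hle : (∫ t in (0:ℝ)..x, t^k * Real.exp (-t)) ≤ x^(k+1)/((k:ℝ)+1) := by
      have hmono : (∫ t in (0:ℝ)..x, t^k * Real.exp (-t)) ≤ ∫ t in (0:ℝ)..x, t^k := by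
        apply intervalIntegral.integral_mono_on hx0.le
        · exact hcont.intervalIntegrable _ _
        · exact (Continuous.intervalIntegrable (by continuity) _ _)
        · intro t ht
          calc t^k * Real.exp (-t) ≤ t^k * 1 := by
                exact mul_le_mul_of_nonneg_left
                  (Real.exp_le_one_iff.2 (neg_nonpos.2 ht.1)) (pow_nonneg ht.1 k)
            _ = t^k := mul_one _
      calc (∫ t in (0:ℝ)..x, t^k * Real.exp (-t)) ≤ ∫ t in (0:ℝ)..x, t^k := hmono
        _ = x^(k+1)/((k:ℝ)+1) := by rw [integral_pow]; ring
    calc (∫ t in (0:ℝ)..x, t^k * Real.exp (-t)) / x^(k+1)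
        ≤ (x^(k+1)/((k:ℝ)+1)) / x^(k+1) := by gcongr
      _ = 1/((k:ℝ)+1) := by field_simp

/-- As `x → 0⁺`, `F_ℓ(x)/x^{ℓ+1} → 1/(ℓ+1)!`, i.e. `F_ℓ(x) ~ x^{ℓ+1}/(ℓ+1)!`. -/
theorem Fgam_asymptotic_zero (ℓ : ℕ) :
    Filter.Tendsto (fun x : ℝ => Fgam ℓ x / x ^ (ℓ + 1))
      (nhdsWithin 0 (Set.Ioi 0)) (nhds (1 / (Nat.factorial (ℓ + 1) : ℝ))) := by
  rcases ℓ with _ | m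
  · have heq : ∀ᶠ x : ℝ in nhdsWithin 0 (Set.Ioi 0),
        (1 : ℝ) = Fgam 0 x / x ^ (0 + 1) := by
      filter_upwards [self_mem_nhdsWithin] with x hx
      have hx0 : (0:ℝ) < x := hx
      simp [Fgam, regIncGamma, div_self hx0.ne']
    have : Filter.Tendsto (fun _ : ℝ => (1:ℝ)) (nhdsWithin 0 (Set.Ioi 0))
        (nhds (1 / (Nat.factorial (0 + 1) : ℝ))) := by
      norm_num
    exact this.congr' heq
  · have h1 := key_tendsto m
    have h2 := key_tendsto (m+1)
    have hcomb := ((h1.const_mul ((1:ℝ)/(Nat.factorial m : ℝ)))).sub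
      (h2.const_mul (((m:ℝ)+1)/(Nat.factorial (m+1) : ℝ)))
    push_cast at hcomb
    have hfm : (Nat.factorial m : ℝ) ≠ 0 := by positivity
    have hfm1 : ((Nat.factorial (m+1) : ℝ)) ≠ 0 := by positivity
    have hval : (1:ℝ)/(Nat.factorial m : ℝ) * (1/((m:ℝ)+1)) -
        ((m:ℝ)+1)/(Nat.factorial (m+1) : ℝ) * (1/(((m:ℝ)+1)+1)) =
        1 / (Nat.factorial (m+1+1) : ℝ) := by
      have e1 : (Nat.factorial (m+1) : ℝ) = ((m:ℝ)+1) * (Nat.factorial m : ℝ) := by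
        push_cast [Nat.factorial_succ]; ring
      have e2 : (Nat.factorial (m+2) : ℝ) = ((m:ℝ)+2) * (Nat.factorial (m+1) : ℝ) := by
        push_cast [Nat.factorial_succ]; ring
      rw [show m+1+1 = m+2 from rfl, e2, e1]
      field_simp
      ring
    rw [← hval]
    apply hcomb.congr'
    filter_upwards [self_mem_nhdsWithin] with x hx
    have hx0 : (0:ℝ) < x := hx
    have hxne : x ≠ 0 := hx0.ne'
    simp only [Fgam, regIncGamma, Nat.succ_ne_zero, if_false, Nat.add_sub_cancel]
    have hpow : x ^ (m + 1 + 1) = x * x ^ (m + 1) := by ring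
    push_cast
    field_simp
    ring
end

section
/- Let p₀, p₁ ≥ 0 with p₀ + p₁ = 1, let h, k ≥ 1 be integers. Let {a_h} be the set of binary sequences (a₁,…,a_k) ∈ {0,1}^k containing no run of more than h consecutive 1's at any position, where in addition the final (unterminated) run of 1's is also required to have length at most h. Then (1 − p₁^{h+1})^k ≤ Σ over sequences in {a_h} of p_{a₁}p_{a₂}⋯p_{a_k}. -/
/-- Extension of a finite binary sequence `a : Fin k → Bool` to `ℕ`, padding with `false`. -/
def extSeq {k : ℕ} (a : Fin k → Bool) (i : ℕ) : Bool :=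
  if hi : i < k then a ⟨i, hi⟩ else false

/-- A sequence is `h`-faithful if it contains no run of more than `h` consecutive `true`s,
including the final (unterminated) run: every window of length `h+1` contains a `false`. -/
def HFaithful (h : ℕ) {k : ℕ} (a : Fin k → Bool) : Prop :=
  ∀ s : ℕ, ∃ j ≤ h, extSeq a (s + j) = false

open scoped Classical
open Finset

noncomputable def Fsum (p₀ p₁ : ℝ) (h k : ℕ) : ℝ :=
  ∑ a ∈ Finset.univ.filter (fun a : Fin k → Bool => HFaithful h a),
    ∏ i, (if a i then p₁ else p₀)

/-- Prepend a run of `j` trues and a false to a sequence of length `k - 1 - j`. -/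
def consRun {k : ℕ} (j : ℕ) (b : Fin (k - 1 - j) → Bool) : Fin k → Bool :=
  fun i => if i.val < j then true else if i.val = j then false
    else extSeq b (i.val - (j + 1))

lemma extSeq_consRun {k j : ℕ} (hj : j < k) (b : Fin (k - 1 - j) → Bool) (n : ℕ) :
    extSeq (consRun j b) n =
      if n < j then true else if n = j then false else extSeq b (n - (j + 1)) := by
  by_cases hn : n < k
  · simp [extSeq, hn, consRun]
  · have h1 : ¬ n < j := by omega
    have h2 : n ≠ j := by omega
    have h3 : ¬ (n - (j + 1) < k - 1 - j) := by omega
    simp [extSeq, hn, h1, h2, h3]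

lemma extSeq_eq_val {k : ℕ} (a : Fin k → Bool) (i : Fin k) : extSeq a i.val = a i := by
  simp [extSeq, i.isLt]

lemma consRun_faithful {h k j : ℕ} (hj : j < k) (hjh : j ≤ h)
    {b : Fin (k - 1 - j) → Bool} (hb : HFaithful h b) : HFaithful h (consRun j b) := by
  intro s
  by_cases hs : s ≤ j
  · refine ⟨j - s, by omega, ?_⟩
    rw [show s + (j - s) = j by omega, extSeq_consRun hj]
    simp
  · obtain ⟨t, ht, hbt⟩ := hb (s - (j + 1))
    refine ⟨t, ht, ?_⟩
    rw [extSeq_consRun hj]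
    have h1 : ¬ s + t < j := by omega
    have h2 : s + t ≠ j := by omega
    rw [if_neg h1, if_neg h2, show s + t - (j + 1) = s - (j + 1) + t by omega]
    exact hbt

lemma consRun_inj {k j : ℕ} (hj : j < k) : Function.Injective (consRun (k := k) j) := by
  intro b b' hbb
  funext i
  have : extSeq (consRun j b) (j + 1 + i.val) = extSeq (consRun j b') (j + 1 + i.val) := by
    rw [hbb]
  rw [extSeq_consRun hj, extSeq_consRun hj] at this
  have h1 : ¬ j + 1 + i.val < j := by omega
  have h2 : j + 1 + i.val ≠ j := by omega
  rw [if_neg h1, if_neg h2, if_neg h1, if_neg h2,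
    show j + 1 + i.val - (j + 1) = i.val by omega, extSeq_eq_val, extSeq_eq_val] at this
  exact this

lemma prod_eq_prod_range {k : ℕ} (w : Bool → ℝ) (a : Fin k → Bool) :
    ∏ i, w (a i) = ∏ i ∈ range k, w (extSeq a i) := by
  rw [← Fin.prod_univ_eq_prod_range (fun i => w (extSeq a i)) k]
  exact Finset.prod_congr rfl fun i _ => by rw [extSeq_eq_val]

lemma prod_consRun (p₀ p₁ : ℝ) {k j : ℕ} (hj : j < k) (b : Fin (k - 1 - j) → Bool) :
    (∏ i, (if consRun j b i then p₁ else p₀)) =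
      p₁ ^ j * p₀ * ∏ i, (if b i then p₁ else p₀) := by
  set w : Bool → ℝ := fun t => if t then p₁ else p₀ with hw
  rw [prod_eq_prod_range w, prod_eq_prod_range w,
    ← Finset.prod_range_mul_prod_Ico (fun i => w (extSeq (consRun j b) i))
      (show j + 1 ≤ k by omega)]
  have e1 : ∏ i ∈ range (j + 1), w (extSeq (consRun j b) i) = p₁ ^ j * p₀ := by
    rw [Finset.prod_range_succ]
    have : ∀ i ∈ range j, w (extSeq (consRun j b) i) = p₁ := by
      intro i hi
      rw [extSeq_consRun hj, if_pos (mem_range.mp hi)]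
      simp [hw]
    rw [Finset.prod_congr rfl this, Finset.prod_const, card_range,
      extSeq_consRun hj, if_neg (lt_irrefl j), if_pos rfl]
    simp [hw]
  have e2 : ∏ i ∈ Ico (j + 1) k, w (extSeq (consRun j b) i)
      = ∏ i ∈ range (k - 1 - j), w (extSeq b i) := by
    rw [Finset.prod_Ico_eq_prod_range]
    have hr : k - (j + 1) = k - 1 - j := by omega
    rw [hr]
    refine Finset.prod_congr rfl fun i _ => ?_
    rw [extSeq_consRun hj]
    have h1 : ¬ j + 1 + i < j := by omega
    have h2 : j + 1 + i ≠ j := by omega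
    rw [if_neg h1, if_neg h2, show j + 1 + i - (j + 1) = i by omega]
  rw [e1, e2]

lemma prodw_nonneg (p₀ p₁ : ℝ) (hp₀ : 0 ≤ p₀) (hp₁ : 0 ≤ p₁) {k : ℕ} (a : Fin k → Bool) :
    0 ≤ ∏ i, (if a i then p₁ else p₀) :=
  Finset.prod_nonneg fun i _ => by by_cases hi : a i <;> simp [hi, hp₀, hp₁]

lemma allTrue_faithful {h k : ℕ} (hkh : k ≤ h) : HFaithful h (fun _ : Fin k => true) := by
  intro s
  refine ⟨k, hkh, ?_⟩
  rw [extSeq, dif_neg (by omega)]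

lemma step (p₀ p₁ : ℝ) (hp₀ : 0 ≤ p₀) (hp₁ : 0 ≤ p₁) (h k : ℕ) (hk : 1 ≤ k) :
    (∑ j ∈ range (min h (k - 1) + 1), p₁ ^ j * p₀ * Fsum p₀ p₁ h (k - 1 - j))
      + (if k ≤ h then p₁ ^ k else 0) ≤ Fsum p₀ p₁ h k := by
  set m := min h (k - 1) with hm
  have hjlt : ∀ j ∈ range (m + 1), j < k ∧ j ≤ h := by
    intro j hj; rw [mem_range] at hj; omega
  set T₁ : Finset (Fin k → Bool) := (range (m + 1)).biUnion
    (fun j => (Finset.univ.filter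
      (fun b : Fin (k - 1 - j) → Bool => HFaithful h b)).image (consRun j)) with hT₁
  have hdisj : (↑(range (m + 1)) : Set ℕ).PairwiseDisjoint
      (fun j => (Finset.univ.filter
        (fun b : Fin (k - 1 - j) → Bool => HFaithful h b)).image (consRun j)) := by
    intro j hj j' hj' hne
    rw [Finset.mem_coe, mem_range] at hj hj'
    rw [Function.onFun, Finset.disjoint_left]
    rintro a ha ha'
    rw [Finset.mem_image] at ha ha'
    obtain ⟨b, -, rfl⟩ := ha
    obtain ⟨b', -, heq⟩ := ha'
    have hjk : j < k := by omega
    have hj'k : j' < k := by omega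
    rcases Nat.lt_trichotomy j j' with hlt | hEq | hgt
    · have h1 : extSeq (consRun j b) j = false := by rw [extSeq_consRun hjk]; simp
      have h2 : extSeq (consRun j' b') j = true := by
        rw [extSeq_consRun hj'k, if_pos hlt]
      rw [heq, h1] at h2; exact Bool.false_ne_true h2
    · exact hne hEq
    · have h1 : extSeq (consRun j' b') j' = false := by rw [extSeq_consRun hj'k]; simp
      have h2 : extSeq (consRun j b) j' = true := by rw [extSeq_consRun hjk, if_pos hgt]
      rw [← heq, h1] at h2; exact Bool.false_ne_true h2
  have hsum1 : ∑ a ∈ T₁, ∏ i, (if a i then p₁ else p₀)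
      = ∑ j ∈ range (m + 1), p₁ ^ j * p₀ * Fsum p₀ p₁ h (k - 1 - j) := by
    rw [hT₁, Finset.sum_biUnion hdisj]
    refine Finset.sum_congr rfl fun j hj => ?_
    have hjk : j < k := (hjlt j hj).1
    rw [Finset.sum_image (fun b _ b' _ hbb => consRun_inj hjk hbb), Fsum, Finset.mul_sum]
    exact Finset.sum_congr rfl fun b _ => prod_consRun p₀ p₁ hjk b
  have hsub : T₁ ⊆ Finset.univ.filter (fun a : Fin k → Bool => HFaithful h a) := by
    intro a ha
    rw [hT₁, Finset.mem_biUnion] at ha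
    obtain ⟨j, hj, ha⟩ := ha
    rw [Finset.mem_image] at ha
    obtain ⟨b, hb, rfl⟩ := ha
    rw [Finset.mem_filter] at hb ⊢
    exact ⟨Finset.mem_univ _, consRun_faithful (hjlt j hj).1 (hjlt j hj).2 hb.2⟩
  by_cases hkh : k ≤ h
  · have hnot : (fun _ : Fin k => true) ∉ T₁ := by
      intro hmem
      rw [hT₁, Finset.mem_biUnion] at hmem
      obtain ⟨j, hj, hmem⟩ := hmem
      rw [Finset.mem_image] at hmem
      obtain ⟨b, -, heq⟩ := hmem
      have hjk : j < k := (hjlt j hj).1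
      have hfalse : extSeq (consRun j b) j = false := by rw [extSeq_consRun hjk]; simp
      rw [heq] at hfalse
      rw [extSeq, dif_pos hjk] at hfalse
      exact Bool.noConfusion hfalse
    have hsubT : insert (fun _ : Fin k => true) T₁
        ⊆ Finset.univ.filter (fun a : Fin k → Bool => HFaithful h a) := by
      intro a ha
      rw [Finset.mem_insert] at ha
      rcases ha with rfl | ha
      · rw [Finset.mem_filter]; exact ⟨Finset.mem_univ _, allTrue_faithful hkh⟩
      · exact hsub ha
    have hts : ∑ a ∈ insert (fun _ : Fin k => true) T₁, ∏ i, (if a i then p₁ else p₀)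
        = p₁ ^ k + ∑ j ∈ range (m + 1), p₁ ^ j * p₀ * Fsum p₀ p₁ h (k - 1 - j) := by
      rw [Finset.sum_insert hnot, hsum1]
      congr 1
      simp
    rw [if_pos hkh, add_comm, ← hts, Fsum]
    exact Finset.sum_le_sum_of_subset_of_nonneg hsubT
      (fun a _ _ => prodw_nonneg p₀ p₁ hp₀ hp₁ a)
  · rw [if_neg hkh, add_zero, ← hsum1, Fsum]
    exact Finset.sum_le_sum_of_subset_of_nonneg hsub
      (fun a _ _ => prodw_nonneg p₀ p₁ hp₀ hp₁ a)

lemma Fsum_zero (p₀ p₁ : ℝ) (h : ℕ) : Fsum p₀ p₁ h 0 = 1 := by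
  rw [Fsum]
  have hall : ∀ a : Fin 0 → Bool, HFaithful h a := by
    intro a s
    exact ⟨0, Nat.zero_le h, by rw [extSeq, dif_neg (by omega)]⟩
  rw [Finset.filter_true_of_mem (fun a _ => hall a)]
  simp

lemma main_bound (p₀ p₁ : ℝ) (hp₀ : 0 ≤ p₀) (hp₁ : 0 ≤ p₁) (hsum : p₀ + p₁ = 1) (h : ℕ) :
    ∀ k, (1 - p₁ ^ (h + 1)) ^ k ≤ Fsum p₀ p₁ h k := by
  have hp1le : p₁ ≤ 1 := by linarith
  have hx0 : 0 ≤ p₁ ^ (h + 1) := pow_nonneg hp₁ _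
  have hx1 : p₁ ^ (h + 1) ≤ 1 := pow_le_one₀ hp₁ hp1le
  have hgeom : ∀ n : ℕ, ∑ j ∈ range n, p₁ ^ j * p₀ = 1 - p₁ ^ n := by
    intro n
    rw [← Finset.sum_mul, show p₀ = 1 - p₁ by linarith]
    have h2 := geom_sum_mul p₁ n
    linear_combination -h2
  intro k
  induction k using Nat.strong_induction_on with
  | _ k ih =>
    rcases Nat.eq_zero_or_pos k with rfl | hk
    · rw [Fsum_zero]; simp
    · refine le_trans ?_ (step p₀ p₁ hp₀ hp₁ h k hk)
      have hterm : ∑ j ∈ range (min h (k - 1) + 1), p₁ ^ j * p₀ * (1 - p₁ ^ (h + 1)) ^ (k - 1 - j)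
          ≤ ∑ j ∈ range (min h (k - 1) + 1), p₁ ^ j * p₀ * Fsum p₀ p₁ h (k - 1 - j) := by
        refine Finset.sum_le_sum fun j hj => ?_
        exact mul_le_mul_of_nonneg_left (ih (k - 1 - j) (by omega))
          (mul_nonneg (pow_nonneg hp₁ j) hp₀)
      refine le_trans ?_ (add_le_add_left hterm _)
      have hA : (∑ j ∈ range (min h (k - 1) + 1), p₁ ^ j * p₀) * (1 - p₁ ^ (h + 1)) ^ (k - 1)
          ≤ ∑ j ∈ range (min h (k - 1) + 1), p₁ ^ j * p₀ * (1 - p₁ ^ (h + 1)) ^ (k - 1 - j) := by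
        rw [Finset.sum_mul]
        refine Finset.sum_le_sum fun j hj => ?_
        refine mul_le_mul_of_nonneg_left ?_ (mul_nonneg (pow_nonneg hp₁ j) hp₀)
        exact pow_le_pow_of_le_one (by linarith) (by linarith) (by omega)
      by_cases hkh : k ≤ h
      · rw [if_pos hkh]
        have hmk : min h (k - 1) + 1 = k := by omega
        rw [hmk] at hA ⊢
        have hpk0 : 0 ≤ p₁ ^ k := pow_nonneg hp₁ _
        have hpow : (0:ℝ) ≤ (1 - p₁ ^ (h + 1)) ^ (k - 1) := pow_nonneg (by linarith) _
        have hpow1 : (1 - p₁ ^ (h + 1)) ^ (k - 1) ≤ 1 := pow_le_one₀ (by linarith) (by linarith)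
        calc (1 - p₁ ^ (h + 1)) ^ k ≤ (1 - p₁ ^ (h + 1)) ^ (k - 1) :=
              pow_le_pow_of_le_one (by linarith) (by linarith) (by omega)
          _ = (1 - p₁ ^ k) * (1 - p₁ ^ (h + 1)) ^ (k - 1)
              + p₁ ^ k * (1 - p₁ ^ (h + 1)) ^ (k - 1) := by ring
          _ ≤ (∑ j ∈ range k, p₁ ^ j * p₀) * (1 - p₁ ^ (h + 1)) ^ (k - 1) + p₁ ^ k := by
              rw [hgeom k]
              have : p₁ ^ k * (1 - p₁ ^ (h + 1)) ^ (k - 1) ≤ p₁ ^ k :=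
                mul_le_of_le_one_right hpk0 hpow1
              linarith
          _ ≤ _ := add_le_add_left hA _
      · rw [if_neg hkh, add_zero]
        have hmk : min h (k - 1) + 1 = h + 1 := by omega
        rw [hmk] at hA ⊢
        calc (1 - p₁ ^ (h + 1)) ^ k
            = (∑ j ∈ range (h + 1), p₁ ^ j * p₀) * (1 - p₁ ^ (h + 1)) ^ (k - 1) := by
              have hksucc : (1 - p₁ ^ (h + 1)) ^ k
                  = (1 - p₁ ^ (h + 1)) ^ (k - 1) * (1 - p₁ ^ (h + 1)) := by
                rw [← pow_succ, show k - 1 + 1 = k by omega]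
              rw [hgeom (h + 1), hksucc]
              ring
          _ ≤ _ := hA

open scoped Classical in
/-- The total i.i.d. Bernoulli probability of `h`-faithful binary sequences of length `k`
is at least `(1 − p₁^{h+1})^k`. -/
theorem faithful_prob_lower_bound (p₀ p₁ : ℝ) (hp₀ : 0 ≤ p₀) (hp₁ : 0 ≤ p₁)
    (hsum : p₀ + p₁ = 1) (h k : ℕ) (hh : 1 ≤ h) (hk : 1 ≤ k) :
    (1 - p₁ ^ (h + 1)) ^ k ≤
      ∑ a ∈ Finset.univ.filter (fun a : Fin k → Bool => HFaithful h a),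
        ∏ i, (if a i then p₁ else p₀) := by
  exact main_bound p₀ p₁ hp₀ hp₁ hsum h k
end

section
/- Poisson trajectory decomposition: let E₀,…,E_N be linear maps on a finite-dimensional space, p₀,…,p_N ≥ 0 with Σp_μ = 1, and γ > 0. Define L = γ(Σ_μ p_μ E_μ − I). Then exp(Lt) = Σ_{k=0}^∞ Σ_{(μ₁,…,μ_k)} [(γt)^k e^{-γt}/k!] p_{μ₁}⋯p_{μ_k} E_{μ_k}∘⋯∘E_{μ₁}, and the coefficients (γt)^k e^{-γt} p_{μ₁}⋯p_{μ_k}/k! are nonnegative and sum to 1 over all finite sequences. -/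
open scoped BigOperators

noncomputable section

variable {n N : ℕ}

/-- Composition `E_{μ_k} ∘ ⋯ ∘ E_{μ₁}` of maps along a trajectory `(μ₁,…,μ_k)`. -/
def trajComp (E : Fin (N + 1) → (EuclideanSpace ℂ (Fin n) →L[ℂ] EuclideanSpace ℂ (Fin n)))
    {k : ℕ} (μs : Fin k → Fin (N + 1)) :
    EuclideanSpace ℂ (Fin n) →L[ℂ] EuclideanSpace ℂ (Fin n) :=
  (List.ofFn fun i => E (μs i)).foldl (fun acc f => f.comp acc) (ContinuousLinearMap.id ℂ _)


private lemma foldl_comp_eq (l : List (EuclideanSpace ℂ (Fin n) →L[ℂ] EuclideanSpace ℂ (Fin n)))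
    (b : EuclideanSpace ℂ (Fin n) →L[ℂ] EuclideanSpace ℂ (Fin n)) :
    l.foldl (fun acc f => f.comp acc) b
      = (l.foldl (fun acc f => f.comp acc) (ContinuousLinearMap.id ℂ _)).comp b := by
  induction l generalizing b with
  | nil => simp
  | cons a l ih =>
    simp only [List.foldl_cons]
    rw [ih (a.comp b), ih (a.comp (ContinuousLinearMap.id ℂ _))]
    ext x; simp

lemma trajComp_cons (E : Fin (N + 1) → (EuclideanSpace ℂ (Fin n) →L[ℂ] EuclideanSpace ℂ (Fin n)))
    {k : ℕ} (ν : Fin (N + 1)) (μs : Fin k → Fin (N + 1)) :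
    trajComp E (Fin.cons ν μs) = (trajComp E μs).comp (E ν) := by
  unfold trajComp
  rw [List.ofFn_succ]
  simp only [Fin.cons_zero, Fin.cons_succ, List.foldl_cons]
  rw [foldl_comp_eq]
  congr 1

lemma pow_eq_sum_traj (E : Fin (N + 1) → (EuclideanSpace ℂ (Fin n) →L[ℂ] EuclideanSpace ℂ (Fin n)))
    (p : Fin (N + 1) → ℝ) (k : ℕ) :
    (∑ μ, (p μ : ℂ) • E μ) ^ k
      = ∑ μs : Fin k → Fin (N + 1), (∏ i, (p (μs i) : ℂ)) • trajComp E μs := by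
  induction k with
  | zero =>
    simp [trajComp]
    rfl
  | succ k ih =>
    rw [pow_succ, ih, Finset.sum_mul]
    rw [← Equiv.sum_comp (Fin.consEquiv fun _ => Fin (N + 1))
      (fun μs => (∏ i, (p (μs i) : ℂ)) • trajComp E μs), Fintype.sum_prod_type]
    rw [Finset.sum_comm]
    refine Finset.sum_congr rfl fun μs _ => ?_
    rw [Finset.mul_sum]
    refine Finset.sum_congr rfl fun ν _ => ?_
    have hc : (Fin.consEquiv fun _ => Fin (N + 1)) (ν, μs) = Fin.cons ν μs := rfl
    rw [hc, trajComp_cons, Fin.prod_univ_succ]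
    simp only [Fin.cons_zero, Fin.cons_succ]
    rw [smul_mul_smul_comm]
    rw [mul_comm ((p ν : ℂ))]
    rfl

set_option maxHeartbeats 1600000 in
/-- Poisson trajectory decomposition: for `L = γ(Σ_μ p_μ E_μ − I)`,
`exp(Lt) = Σ_k Σ_{μ₁…μ_k} [(γt)^k e^{-γt}/k!] p_{μ₁}⋯p_{μ_k} E_{μ_k}∘⋯∘E_{μ₁}`,
the coefficients are nonnegative, and they sum to 1. -/
theorem poisson_trajectory_decomposition
    (E : Fin (N + 1) → (EuclideanSpace ℂ (Fin n) →L[ℂ] EuclideanSpace ℂ (Fin n)))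
    (p : Fin (N + 1) → ℝ) (hp : ∀ μ, 0 ≤ p μ) (hsum : ∑ μ, p μ = 1)
    (γ t : ℝ) (hγ : 0 < γ) (ht : 0 ≤ t) :
    (NormedSpace.exp ((t : ℂ) • ((γ : ℂ) • ((∑ μ, (p μ : ℂ) • E μ) - 1)))
      = ∑' k : ℕ, ∑ μs : Fin k → Fin (N + 1),
          ((((γ * t) ^ k * Real.exp (-(γ * t)) / (Nat.factorial k : ℝ))
            * ∏ i, p (μs i) : ℝ) : ℂ) • trajComp E μs) ∧
    (∀ (k : ℕ) (μs : Fin k → Fin (N + 1)),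
      0 ≤ ((γ * t) ^ k * Real.exp (-(γ * t)) / (Nat.factorial k : ℝ)) * ∏ i, p (μs i)) ∧
    (∑' k : ℕ, ∑ μs : Fin k → Fin (N + 1),
      ((γ * t) ^ k * Real.exp (-(γ * t)) / (Nat.factorial k : ℝ)) * ∏ i, p (μs i)) = 1 := by
  set A : EuclideanSpace ℂ (Fin n) →L[ℂ] EuclideanSpace ℂ (Fin n) := ∑ μ, (p μ : ℂ) • E μ with hA
  set c : ℂ := ((γ * t : ℝ) : ℂ) with hc
  refine ⟨?_, ?_, ?_⟩
  · -- main identity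
    have h1 : (t : ℂ) • ((γ : ℂ) • (A - 1)) = c • A + (-c) • (1 : _) := by
      rw [smul_smul, smul_sub, sub_eq_add_neg, ← neg_smul]
      have : (t : ℂ) * (γ : ℂ) = c := by rw [hc]; push_cast; ring
      rw [this]
    rw [h1]
    have hcomm : Commute (c • A) ((-c) • (1 : EuclideanSpace ℂ (Fin n) →L[ℂ] EuclideanSpace ℂ (Fin n))) :=
      ((Commute.one_right A).smul_left c).smul_right (-c)
    rw [show NormedSpace.exp (c • A + (-c) • (1 : EuclideanSpace ℂ (Fin n) →L[ℂ] EuclideanSpace ℂ (Fin n)))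
        = NormedSpace.exp (c • A) * NormedSpace.exp ((-c) • (1 : EuclideanSpace ℂ (Fin n) →L[ℂ] EuclideanSpace ℂ (Fin n))) by
      let _ : NormedAlgebra ℚ (EuclideanSpace ℂ (Fin n) →L[ℂ] EuclideanSpace ℂ (Fin n)) :=
        .restrictScalars ℚ ℂ _
      exact NormedSpace.exp_add_of_commute hcomm]
    have h2 : NormedSpace.exp ((-c) • (1 : EuclideanSpace ℂ (Fin n) →L[ℂ] EuclideanSpace ℂ (Fin n)))
        = Complex.exp (-c) • 1 := by
      rw [← Algebra.algebraMap_eq_smul_one, ← NormedSpace.algebraMap_exp_comm,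
        Algebra.algebraMap_eq_smul_one, Complex.exp_eq_exp_ℂ]
    rw [h2, mul_smul_comm, mul_one, NormedSpace.exp_eq_tsum ℂ,
      ← Summable.tsum_const_smul (Complex.exp (-c)) (NormedSpace.expSeries_summable' (𝕂 := ℂ) (c • A))]
    refine tsum_congr fun k => ?_
    rw [smul_pow, smul_smul, smul_smul, pow_eq_sum_traj, Finset.smul_sum]
    refine Finset.sum_congr rfl fun μs _ => ?_
    rw [smul_smul]
    congr 1
    have hck : c ^ k = (((γ * t) ^ k : ℝ) : ℂ) := by rw [hc]; push_cast; ring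
    have hek : Complex.exp (-c) = ((Real.exp (-(γ * t)) : ℝ) : ℂ) := by
      rw [hc, Complex.ofReal_exp, Complex.ofReal_neg]
    rw [hck, hek]
    push_cast
    ring
  · intro k μs
    refine mul_nonneg (div_nonneg (mul_nonneg (pow_nonneg (mul_nonneg hγ.le ht) k)
      (Real.exp_pos _).le) (Nat.cast_nonneg _)) (Finset.prod_nonneg fun i _ => hp _)
  · have hin : ∀ k : ℕ, (∑ μs : Fin k → Fin (N + 1), ∏ i, p (μs i)) = 1 := by
      intro k
      rw [← Fintype.piFinset_univ, ← Finset.prod_univ_sum]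
      simp [hsum]
    have : ∀ k : ℕ, (∑ μs : Fin k → Fin (N + 1),
        ((γ * t) ^ k * Real.exp (-(γ * t)) / (Nat.factorial k : ℝ)) * ∏ i, p (μs i))
        = Real.exp (-(γ * t)) * ((γ * t) ^ k / (Nat.factorial k : ℝ)) := by
      intro k
      rw [← Finset.mul_sum, hin k, mul_one]
      ring
    simp_rw [this]
    rw [tsum_mul_left]
    have h3 : (∑' k : ℕ, (γ * t) ^ k / (Nat.factorial k : ℝ)) = Real.exp (γ * t) := by
      rw [Real.exp_eq_exp_ℝ, NormedSpace.exp_eq_tsum_div]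
    rw [h3, ← Real.exp_add]
    simp


end
end
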